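/- Let (P,≤,*) be a relatively pseudocomplemented poset with greatest element 1 and define t₂(x,y₁,y₂) := (y₁*(y₂*x))*x. Then: (i) t₂ is an ideal term in y₁,y₂, i.e. t₂(a,1,1) = 1 for all a ∈ P; (ii) if D ⊆ P contains 1 and is closed with respect to t₂ (i.e. t₂(a,b₁,b₂) ∈ D for all a ∈ P and b₁,b₂ ∈ D), then D is a deductive system of P; (iii) if Θ is a congruence on (P,≤,*), then [1]Θ contains 1 and is closed with respect to t₂. -/

import Mathlib

/- Common definitions for congruences on posets. -/

variable {P : Type*}

/-- The set of maximal elements of `A`. -/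
def MaxEl [PartialOrder P] (A : Set P) : Set P := {x ∈ A | ∀ y ∈ A, x ≤ y → x = y}

/-- The set of minimal elements of `A`. -/
def MinEl [PartialOrder P] (A : Set P) : Set P := {x ∈ A | ∀ y ∈ A, y ≤ x → x = y}

/-- `Max L(a,b)`: the maximal elements of the set of lower bounds of `{a, b}`. -/
def MaxL [PartialOrder P] (a b : P) : Set P := MaxEl (lowerBounds {a, b})

/-- `Min U(a,b)`: the minimal elements of the set of upper bounds of `{a, b}`. -/
def MinU [PartialOrder P] (a b : P) : Set P := MinEl (upperBounds {a, b})

/-- Compatibility of a binary relation `R` with a binary operator `Q : P × P → 2^P`. -/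
def Compat (R : P → P → Prop) (Q : P → P → Set P) : Prop :=
  ∀ a₁ b₁ a₂ b₂ : P, R a₁ b₁ → R a₂ b₂ → ∃ a ∈ Q a₁ a₂, ∃ b ∈ Q b₁ b₂, R a b

/-- A congruence on a poset: an equivalence relation compatible with `Max L` and `Min U`. -/
def IsCong [PartialOrder P] (R : P → P → Prop) : Prop :=
  Equivalence R ∧ Compat R MaxL ∧ Compat R MinU

/-- The class `[a]Θ` of the relation `Θ`. -/
def cls (R : P → P → Prop) (a : P) : Set P := {x | R a x}

section Aux

variable [PartialOrder P] (s : P → P → P)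
  (hs : ∀ x y : P, IsGreatest {z : P | lowerBounds {x, z} ⊆ lowerBounds {y}} (s x y))
  (one : P) (hone : ∀ x : P, x ≤ one)

include hs hone

lemma aux_s_self (x : P) : s x x = one := by
  refine le_antisymm (hone _) ((hs x x).2 ?_)
  intro w hw b hb
  simp only [Set.mem_singleton_iff] at hb
  exact hb ▸ hw (Set.mem_insert x {one})

lemma aux_s_one (a : P) : s one a = a := by
  refine le_antisymm ?_ ((hs one a).2 ?_)
  · have h := (hs one a).1
    have hmem : s one a ∈ lowerBounds {one, s one a} := by
      intro b hb
      rcases hb with h1 | h2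
      · rw [h1]; exact hone _
      · simp only [Set.mem_singleton_iff] at h2
        exact h2 ▸ le_refl _
    exact h hmem rfl
  · intro w hw b hb
    simp only [Set.mem_singleton_iff] at hb
    exact hb ▸ hw (Set.mem_insert_of_mem one rfl)

end Aux

theorem stmt13 [PartialOrder P] (s : P → P → P)
    (hs : ∀ x y : P, IsGreatest {z : P | lowerBounds {x, z} ⊆ lowerBounds {y}} (s x y))
    (one : P) (hone : ∀ x : P, x ≤ one) :
    (∀ a : P, s (s one (s one a)) a = one) ∧
    (∀ D : Set P, one ∈ D →
      (∀ a : P, ∀ b₁ ∈ D, ∀ b₂ ∈ D, s (s b₁ (s b₂ a)) a ∈ D) →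
      (one ∈ D ∧ ∀ x ∈ D, ∀ y : P, s x y ∈ D → y ∈ D)) ∧
    (∀ Θ : P → P → Prop, IsCong Θ →
      (∀ a₁ b₁ a₂ b₂ : P, Θ a₁ b₁ → Θ a₂ b₂ → Θ (s a₁ a₂) (s b₁ b₂)) →
      (one ∈ cls Θ one ∧
        ∀ a : P, ∀ b₁ ∈ cls Θ one, ∀ b₂ ∈ cls Θ one, s (s b₁ (s b₂ a)) a ∈ cls Θ one)) := by
  have hself := aux_s_self s hs one hone
  have hone' := aux_s_one s hs one hone
  have hkey : ∀ a : P, s (s one (s one a)) a = one := by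
    intro a; rw [hone', hone', hself]
  refine ⟨hkey, ?_, ?_⟩
  · intro D h1 hcl
    refine ⟨h1, ?_⟩
    intro x hx y hxy
    have := hcl y (s x y) hxy x hx
    rwa [hself, hone'] at this
  · intro Θ ⟨heq, _, _⟩ hcomp
    refine ⟨heq.refl one, ?_⟩
    intro a b₁ hb₁ b₂ hb₂
    have h := hcomp (s one (s one a)) (s b₁ (s b₂ a)) a a
      (hcomp one b₁ (s one a) (s b₂ a) hb₁ (hcomp one b₂ a a hb₂ (heq.refl a)))
      (heq.refl a)
    rwa [hkey] at h
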